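/- Suppose the action of G on M is continuous, proper and cocompact, and let 𝔠 be a cutoff function. Then for all continuous compactly supported s₁, s₂ : M → H, one has ∫_M 𝔠(m)² ⟨Φ(s₁)(m), Φ(s₂)(m)⟩_H dμ(m) = ∫_G ⟨s₁, g·s₂⟩_{L²} dg, where in particular both integrals converge. -/

import Mathlib

set_option linter.unusedSectionVars false
set_option maxHeartbeats 1000000

open MeasureTheory Pointwise Filter Topology
open scoped ComplexConjugate

section Aux

variable {G : Type*} [Group G] [TopologicalSpace G] [IsTopologicalGroup G]
    [LocallyCompactSpace G] [T2Space G] [MeasurableSpace G] [BorelSpace G]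

/-- Inversion invariance of integrals of continuous compactly supported functions
for a left- and right-invariant Haar measure (unimodularity). -/
lemma aux_integral_inv_eq (μG : Measure G) [μG.IsHaarMeasure] [μG.IsMulRightInvariant]
    {f : G → ℝ} (hf : Continuous f) (hsupp : HasCompactSupport f) :
    ∫ g, f g⁻¹ ∂μG = ∫ g, f g ∂μG := by
  haveI : IsFiniteMeasureOnCompacts μG.inv := ⟨fun {K} hK => by
    rw [Measure.inv_apply]; exact hK.inv.measure_lt_top⟩
  obtain ⟨c, hc⟩ := Measure.exists_integral_isMulLeftInvariant_eq_smul_of_hasCompactSupport μG.inv μG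
  have key : ∀ f : G → ℝ, Continuous f → HasCompactSupport f →
      ∫ g, f g⁻¹ ∂μG = (c : ℝ) * ∫ g, f g ∂μG := by
    intro f hf hsupp
    have h1 : ∫ g, f g ∂μG.inv = ∫ g, f g⁻¹ ∂μG := by
      rw [Measure.inv_def]
      exact integral_map measurable_inv.aemeasurable
        (hf.stronglyMeasurable_of_hasCompactSupport hsupp).aestronglyMeasurable
    rw [← h1, hc f hf hsupp, integral_smul_nnreal_measure]
    rfl
  obtain ⟨⟨g₀, g₀_cont⟩, g₀_comp, g₀_nonneg, g₀_one⟩ :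
      ∃ g₀ : C(G, ℝ), HasCompactSupport g₀ ∧ 0 ≤ g₀ ∧ g₀ 1 ≠ 0 :=
    exists_continuous_nonneg_pos 1
  have hpos : 0 < ∫ g, g₀ g ∂μG :=
    g₀_cont.integral_pos_of_hasCompactSupport_nonneg_nonzero g₀_comp g₀_nonneg g₀_one
  have hcomp_inv : HasCompactSupport (fun g : G => g₀ g⁻¹) :=
    g₀_comp.comp_homeomorph (Homeomorph.inv G)
  have e1 : ∫ g, g₀ g⁻¹ ∂μG = c * ∫ g, g₀ g ∂μG := key _ g₀_cont g₀_comp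
  have e2 : ∫ g, g₀ g ∂μG = c * ∫ g, g₀ g⁻¹ ∂μG := by
    simpa using key (fun g => g₀ g⁻¹) (g₀_cont.comp continuous_inv) hcomp_inv
  have hc1 : (c : ℝ) = 1 := by
    have h3 : ∫ g, g₀ g ∂μG = c * (c * ∫ g, g₀ g ∂μG) := by rw [← e1]; exact e2
    have hcnn : (0:ℝ) ≤ (c : ℝ) := c.coe_nonneg
    have h4 : ((1:ℝ) - (c:ℝ)^2) * ∫ g, g₀ g ∂μG = 0 := by linear_combination h3
    rcases mul_eq_zero.1 h4 with h | h
    · have h5 : ((c:ℝ) - 1) * ((c:ℝ) + 1) = 0 := by linear_combination -h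
      rcases mul_eq_zero.1 h5 with h6 | h6
      · linarith
      · linarith
    · exact absurd h hpos.ne'
  rw [key f hf hsupp, hc1, one_mul]

variable {M : Type*} [TopologicalSpace M] [T2Space M]
    [MulAction G M] [ContinuousSMul G M]

/-- Properness: the transporter set from a compact set to a compact set is compact. -/
lemma aux_isCompact_transporter (hproper : IsProperMap (fun p : G × M => (p.1 • p.2, p.2)))
    {A B : Set M} (hA : IsCompact A) (hB : IsCompact B) :
    IsCompact {g : G | ∃ x ∈ A, g • x ∈ B} := by
  have h1 : IsCompact ((fun p : G × M => (p.1 • p.2, p.2)) ⁻¹' (B ×ˢ A)) :=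
    hproper.isCompact_preimage (hB.prod hA)
  have h2 := h1.image continuous_fst
  convert h2 using 1
  ext g
  simp only [Set.mem_setOf_eq, Set.mem_image, Set.mem_preimage, Set.mem_prod]
  constructor
  · rintro ⟨x, hxA, hxB⟩; exact ⟨(g, x), ⟨hxB, hxA⟩, rfl⟩
  · rintro ⟨⟨g', x⟩, ⟨hxB, hxA⟩, rfl⟩; exact ⟨x, hxA, hxB⟩

variable {H : Type*} [NormedAddCommGroup H] [InnerProductSpace ℂ H]

/-- Joint continuity of the action of `G` on `H` through `ρ`. -/
lemma aux_continuous_rho (ρ : G →* (H ≃ₗᵢ[ℂ] H)) (hρ : ∀ v : H, Continuous fun g : G => ρ g v) :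
    Continuous fun p : G × H => ρ p.1 p.2 := by
  rw [continuous_iff_continuousAt]
  rintro ⟨g₀, v₀⟩
  rw [ContinuousAt, tendsto_iff_dist_tendsto_zero]
  have hbound : ∀ p : G × H,
      dist (ρ p.1 p.2) (ρ g₀ v₀) ≤ dist p.2 v₀ + dist (ρ p.1 v₀) (ρ g₀ v₀) := by
    intro p
    calc dist (ρ p.1 p.2) (ρ g₀ v₀)
        ≤ dist (ρ p.1 p.2) (ρ p.1 v₀) + dist (ρ p.1 v₀) (ρ g₀ v₀) := dist_triangle _ _ _
      _ = dist p.2 v₀ + dist (ρ p.1 v₀) (ρ g₀ v₀) := by rw [(ρ p.1).dist_map]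
  have ha : Tendsto (fun p : G × H => dist p.2 v₀) (𝓝 (g₀, v₀)) (𝓝 0) := by
    have h : Tendsto (fun p : G × H => dist p.2 v₀) (𝓝 (g₀, v₀)) (𝓝 (dist v₀ v₀)) :=
      (continuous_snd.dist continuous_const).tendsto (g₀, v₀)
    simpa using h
  have hb : Tendsto (fun p : G × H => dist (ρ p.1 v₀) (ρ g₀ v₀)) (𝓝 (g₀, v₀)) (𝓝 0) := by
    have h : Tendsto (fun p : G × H => dist (ρ p.1 v₀) (ρ g₀ v₀)) (𝓝 (g₀, v₀))
        (𝓝 (dist (ρ g₀ v₀) (ρ g₀ v₀))) :=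
      (((hρ v₀).comp continuous_fst).dist continuous_const).tendsto (g₀, v₀)
    simpa using h
  have h2 := ha.add hb
  rw [add_zero] at h2
  exact squeeze_zero (fun p => dist_nonneg) hbound h2


variable [LocallyCompactSpace M] [MeasurableSpace M] [BorelSpace M] [CompleteSpace H]
    (μG : Measure G) [μG.IsHaarMeasure]
    (ρ : G →* (H ≃ₗᵢ[ℂ] H)) (hρ : ∀ v : H, Continuous fun g : G => ρ g v)
    (hproper : IsProperMap (fun p : G × M => (p.1 • p.2, p.2)))
    {s : M → H} (hs_cont : Continuous s) (hs_supp : HasCompactSupport s)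

include hproper hs_supp in
lemma aux_hcs_integrand (m : M) :
    HasCompactSupport (fun g : G => ρ g (s (g⁻¹ • m))) := by
  apply HasCompactSupport.intro
    (aux_isCompact_transporter hproper hs_supp (isCompact_singleton : IsCompact {m}))
  intro g hg
  have h0 : s (g⁻¹ • m) = 0 := by
    by_contra h
    exact hg ⟨g⁻¹ • m, subset_tsupport s h, by simp [smul_inv_smul]⟩
  simp [h0]

include hρ hs_cont in
lemma aux_cont_integrand (m : M) : Continuous fun g : G => ρ g (s (g⁻¹ • m)) :=
  (aux_continuous_rho ρ hρ).comp
    (continuous_id.prodMk (hs_cont.comp (continuous_inv.smul continuous_const)))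

include hρ hproper hs_cont hs_supp in
lemma aux_integrable_integrand (m : M) :
    Integrable (fun g : G => ρ g (s (g⁻¹ • m))) μG :=
  (aux_cont_integrand ρ hρ hs_cont m).integrable_of_hasCompactSupport
    (aux_hcs_integrand ρ hproper hs_supp m)

include hρ hproper hs_cont hs_supp in
lemma aux_continuous_avg :
    Continuous fun m : M => ∫ g, ρ g (s (g⁻¹ • m)) ∂μG := by
  rw [continuous_iff_continuousAt]
  intro m₀
  rw [ContinuousAt, Metric.tendsto_nhds]
  intro ε hε
  obtain ⟨L, hLc, hL_mem⟩ := exists_compact_mem_nhds m₀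
  have hm₀L : m₀ ∈ L := mem_of_mem_nhds hL_mem
  set E := {g : G | ∃ x ∈ tsupport s, g • x ∈ L} with hE_def
  have hE : IsCompact E := aux_isCompact_transporter hproper hs_supp hLc
  set B : ℝ := (μG E).toReal + 1 with hB_def
  have hB_pos : 0 < B := by positivity
  set ε' : ℝ := ε / B with hε'_def
  have hε'_pos : 0 < ε' := div_pos hε hB_pos
  -- uniform convergence on the compact set E via the exponential law
  have hq : Continuous fun p : M × G => s (p.2⁻¹ • p.1) :=
    hs_cont.comp ((continuous_snd.inv).smul continuous_fst)
  have hcurry : Continuous fun m : M => (ContinuousMap.mk _ hq).curry m :=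
    ((ContinuousMap.mk _ hq).curry).continuous
  have h1 : Filter.Tendsto (fun m : M => (ContinuousMap.mk _ hq).curry m) (𝓝 m₀)
      (𝓝 ((ContinuousMap.mk _ hq).curry m₀)) := hcurry.continuousAt
  rw [ContinuousMap.tendsto_iff_forall_isCompact_tendstoUniformlyOn] at h1
  have htu := h1 E hE
  rw [Metric.tendstoUniformlyOn_iff] at htu
  filter_upwards [hL_mem, htu ε' hε'_pos] with m hmL hm
  simp only [ContinuousMap.curry_apply, ContinuousMap.coe_mk] at hm
  have hint₁ := aux_integrable_integrand μG ρ hρ hproper hs_cont hs_supp m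
  have hint₂ := aux_integrable_integrand μG ρ hρ hproper hs_cont hs_supp m₀
  rw [dist_eq_norm, ← integral_sub hint₁ hint₂]
  have hnorm : ∀ g : G, ‖ρ g (s (g⁻¹ • m)) - ρ g (s (g⁻¹ • m₀))‖
      = ‖s (g⁻¹ • m) - s (g⁻¹ • m₀)‖ := by
    intro g
    rw [← map_sub (ρ g), (ρ g).norm_map]
  have hbound : ∀ g : G, ‖ρ g (s (g⁻¹ • m)) - ρ g (s (g⁻¹ • m₀))‖
      ≤ E.indicator (fun _ => ε') g := by
    intro g
    by_cases hg : g ∈ E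
    · rw [Set.indicator_of_mem hg, hnorm g, ← dist_eq_norm, dist_comm]
      exact (hm g hg).le
    · have h0 : s (g⁻¹ • m) = 0 := by
        by_contra h
        exact hg ⟨g⁻¹ • m, subset_tsupport s h, by simpa [smul_inv_smul] using hmL⟩
      have h0' : s (g⁻¹ • m₀) = 0 := by
        by_contra h
        exact hg ⟨g⁻¹ • m₀, subset_tsupport s h, by simpa [smul_inv_smul] using hm₀L⟩
      simp [h0, h0', Set.indicator_of_notMem hg]
  have hboundint : Integrable (E.indicator fun _ : G => ε') μG :=
    (integrableOn_const hE.measure_lt_top.ne).integrable_indicator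
      hE.isClosed.measurableSet
  calc ‖∫ g, (ρ g (s (g⁻¹ • m)) - ρ g (s (g⁻¹ • m₀))) ∂μG‖
      ≤ ∫ g, E.indicator (fun _ => ε') g ∂μG :=
        norm_integral_le_of_norm_le hboundint (Filter.Eventually.of_forall hbound)
    _ = (μG E).toReal • ε' := integral_indicator_const ε' hE.isClosed.measurableSet
    _ < ε := by
        have ht : (0:ℝ) ≤ (μG E).toReal := ENNReal.toReal_nonneg
        rw [smul_eq_mul, hε'_def, hB_def, mul_div_assoc', div_lt_iff₀ (by positivity)]
        nlinarith

include hρ hproper hs_cont hs_supp in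
lemma aux_avg_equivariant (g : G) (m : M) :
    ρ g (∫ h, ρ h (s (h⁻¹ • (g⁻¹ • m))) ∂μG) = ∫ h, ρ h (s (h⁻¹ • m)) ∂μG := by
  have hint := aux_integrable_integrand μG ρ hρ hproper hs_cont hs_supp (g⁻¹ • m)
  have h1 := ContinuousLinearMap.integral_comp_comm
    ((ρ g).toLinearIsometry.toContinuousLinearMap) hint
  simp only [LinearIsometry.coe_toContinuousLinearMap,
    LinearIsometryEquiv.coe_toLinearIsometry] at h1
  rw [← h1]
  have h2 : ∀ h : G, ρ g (ρ h (s (h⁻¹ • (g⁻¹ • m)))) = ρ (g * h) (s ((g * h)⁻¹ • m)) := by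
    intro h
    rw [map_mul]
    simp [mul_smul, mul_inv_rev]
  simp_rw [h2]
  exact integral_mul_left_eq_self (fun h => ρ h (s (h⁻¹ • m))) g

end Aux

lemma aux_integrable_prod {X Y : Type*} [TopologicalSpace X] [TopologicalSpace Y]
    [MeasurableSpace X] [MeasurableSpace Y] [OpensMeasurableSpace X] [OpensMeasurableSpace Y]
    {ν₁ : MeasureTheory.Measure X} {ν₂ : MeasureTheory.Measure Y}
    [MeasureTheory.IsFiniteMeasure ν₁] [MeasureTheory.IsFiniteMeasure ν₂]
    {f : X × Y → ℂ} (hf : Continuous f) (hsupp : HasCompactSupport f) :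
    MeasureTheory.Integrable f (ν₁.prod ν₂) := by
  obtain ⟨C, hC⟩ := hsupp.exists_bound_of_continuous hf
  exact ⟨(hsupp.stronglyMeasurable_of_prod hf).aestronglyMeasurable,
    MeasureTheory.HasFiniteIntegral.of_bounded (C := C) (Filter.Eventually.of_forall hC)⟩

/-- For a proper, cocompact action with cutoff function `c`, the `L²`-type pairing of
`G`-averages against `c²` equals the integral over `G` of the translated `L²` pairings. -/
theorem cutoff_pairing_of_averages
    {G : Type*} [Group G] [TopologicalSpace G] [IsTopologicalGroup G]
    [LocallyCompactSpace G] [T2Space G] [MeasurableSpace G] [BorelSpace G]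
    (μG : Measure G) [μG.IsHaarMeasure] [μG.IsMulRightInvariant]
    {M : Type*} [TopologicalSpace M] [LocallyCompactSpace M] [T2Space M]
    [MulAction G M] [ContinuousSMul G M]
    [MeasurableSpace M] [BorelSpace M]
    (μ : Measure M) [μ.Regular] [SMulInvariantMeasure G M μ]
    {H : Type*} [NormedAddCommGroup H] [InnerProductSpace ℂ H] [CompleteSpace H]
    (ρ : G →* (H ≃ₗᵢ[ℂ] H)) (hρ : ∀ v : H, Continuous fun g : G => ρ g v)
    (hproper : IsProperMap (fun p : G × M => (p.1 • p.2, p.2)))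
    (hcocompact : ∃ K : Set M, IsCompact K ∧ ⋃ g : G, g • K = Set.univ)
    (c : M → ℝ) (hc_cont : Continuous c) (hc_supp : HasCompactSupport c)
    (hc_range : ∀ m : M, c m ∈ Set.Icc (0 : ℝ) 1)
    (hc_cutoff : ∀ m : M, ∫ g, (c (g⁻¹ • m)) ^ 2 ∂μG = 1)
    (s₁ s₂ : M → H)
    (h₁_cont : Continuous s₁) (h₁_supp : HasCompactSupport s₁)
    (h₂_cont : Continuous s₂) (h₂_supp : HasCompactSupport s₂) :
    Integrable (fun m : M => (c m : ℂ) ^ 2 *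
        (inner ℂ (∫ g, ρ g (s₁ (g⁻¹ • m)) ∂μG) (∫ g, ρ g (s₂ (g⁻¹ • m)) ∂μG) : ℂ)) μ ∧
    Integrable (fun g : G => ∫ m, (inner ℂ (s₁ m) (ρ g (s₂ (g⁻¹ • m))) : ℂ) ∂μ) μG ∧
    (∫ m, (c m : ℂ) ^ 2 *
        (inner ℂ (∫ g, ρ g (s₁ (g⁻¹ • m)) ∂μG) (∫ g, ρ g (s₂ (g⁻¹ • m)) ∂μG) : ℂ) ∂μ)
      = ∫ g, ∫ m, (inner ℂ (s₁ m) (ρ g (s₂ (g⁻¹ • m))) : ℂ) ∂μ ∂μG := by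
  classical
  have hΦ₁cont : Continuous fun m : M => ∫ g, ρ g (s₁ (g⁻¹ • m)) ∂μG :=
    aux_continuous_avg μG ρ hρ hproper h₁_cont h₁_supp
  have hΦ₂cont : Continuous fun m : M => ∫ g, ρ g (s₂ (g⁻¹ • m)) ∂μG :=
    aux_continuous_avg μG ρ hρ hproper h₂_cont h₂_supp
  have hK₁ : IsCompact (tsupport s₁) := h₁_supp
  have hK₂ : IsCompact (tsupport s₂) := h₂_supp
  have hKc : IsCompact (tsupport c) := hc_supp
  -- the auxiliary function F = ⟪s₁, Φ₂⟫
  set F : M → ℂ := fun x => (inner ℂ (s₁ x) (∫ h, ρ h (s₂ (h⁻¹ • x)) ∂μG) : ℂ) with hFdef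
  have hFcont : Continuous F := h₁_cont.inner hΦ₂cont
  have hF0 : ∀ x ∉ tsupport s₁, F x = 0 := by
    intro x hx
    rw [hFdef]
    simp [image_eq_zero_of_notMem_tsupport hx]
  ------------------------------------------------------------------
  -- First conjunct
  ------------------------------------------------------------------
  have int1 : Integrable (fun m : M => (c m : ℂ) ^ 2 *
      (inner ℂ (∫ g, ρ g (s₁ (g⁻¹ • m)) ∂μG) (∫ g, ρ g (s₂ (g⁻¹ • m)) ∂μG) : ℂ)) μ := by
    apply Continuous.integrable_of_hasCompactSupport
    · exact ((Complex.continuous_ofReal.comp hc_cont).pow 2).mul (hΦ₁cont.inner hΦ₂cont)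
    · apply HasCompactSupport.intro hKc
      intro m hm
      simp [image_eq_zero_of_notMem_tsupport hm]
  ------------------------------------------------------------------
  -- Second conjunct
  ------------------------------------------------------------------
  set E : Set G := {g : G | ∃ x ∈ tsupport s₂, g • x ∈ tsupport s₁} with hEdef
  have hE : IsCompact E := aux_isCompact_transporter hproper hK₂ hK₁
  have hEm : MeasurableSet E := hE.isClosed.measurableSet
  haveI : IsFiniteMeasure (μG.restrict E) :=
    ⟨by rw [Measure.restrict_apply_univ]; exact hE.measure_lt_top⟩
  haveI : IsFiniteMeasure (μ.restrict (tsupport s₁)) :=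
    ⟨by rw [Measure.restrict_apply_univ]; exact hK₁.measure_lt_top⟩
  have hqcont : Continuous fun p : G × M => (inner ℂ (s₁ p.2) (ρ p.1 (s₂ (p.1⁻¹ • p.2))) : ℂ) :=
    (h₁_cont.comp continuous_snd).inner ((aux_continuous_rho ρ hρ).comp
      (continuous_fst.prodMk (h₂_cont.comp ((continuous_fst.inv).smul continuous_snd))))
  have hqsupp : HasCompactSupport
      fun p : G × M => (inner ℂ (s₁ p.2) (ρ p.1 (s₂ (p.1⁻¹ • p.2))) : ℂ) := by
    apply HasCompactSupport.intro (hE.prod hK₁)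
    rintro ⟨g, m⟩ hp
    by_cases hm : s₁ m = 0
    · simp [hm]
    · have hmK : m ∈ tsupport s₁ := subset_tsupport _ hm
      have hgE : g ∉ E := fun hg => hp (Set.mk_mem_prod hg hmK)
      have h2 : s₂ (g⁻¹ • m) = 0 := by
        by_contra h2
        exact hgE ⟨g⁻¹ • m, subset_tsupport _ h2, by simpa [smul_inv_smul] using hmK⟩
      simp [h2]
  have hq_int : Integrable (fun p : G × M => (inner ℂ (s₁ p.2) (ρ p.1 (s₂ (p.1⁻¹ • p.2))) : ℂ))
      ((μG.restrict E).prod (μ.restrict (tsupport s₁))) := aux_integrable_prod hqcont hqsupp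
  -- for fixed g, the inner integrand is supported in tsupport s₁
  have hq_eq : ∀ g : G, (∫ m, (inner ℂ (s₁ m) (ρ g (s₂ (g⁻¹ • m))) : ℂ) ∂μ)
      = ∫ m in tsupport s₁, (inner ℂ (s₁ m) (ρ g (s₂ (g⁻¹ • m))) : ℂ) ∂μ := by
    intro g
    refine (setIntegral_eq_integral_of_forall_compl_eq_zero fun m hm => ?_).symm
    simp [image_eq_zero_of_notMem_tsupport hm]
  -- for g outside E the inner integrand vanishes identically
  have hq_zero : ∀ g ∉ E, ∀ m : M, (inner ℂ (s₁ m) (ρ g (s₂ (g⁻¹ • m))) : ℂ) = 0 := by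
    intro g hg m
    by_cases hm : s₁ m = 0
    · simp [hm]
    · have hmK : m ∈ tsupport s₁ := subset_tsupport _ hm
      have h2 : s₂ (g⁻¹ • m) = 0 := by
        by_contra h2
        exact hg ⟨g⁻¹ • m, subset_tsupport _ h2, by simpa [smul_inv_smul] using hmK⟩
      simp [h2]
  have int2 : Integrable (fun g : G => ∫ m, (inner ℂ (s₁ m) (ρ g (s₂ (g⁻¹ • m))) : ℂ) ∂μ) μG := by
    have hi : IntegrableOn (fun g : G => ∫ m, (inner ℂ (s₁ m) (ρ g (s₂ (g⁻¹ • m))) : ℂ) ∂μ) E μG := by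
      have h1 := hq_int.integral_prod_left
      have h2 : (fun g : G => ∫ m, (inner ℂ (s₁ m) (ρ g (s₂ (g⁻¹ • m))) : ℂ) ∂μ)
          = fun g : G => ∫ m, (inner ℂ (s₁ m) (ρ g (s₂ (g⁻¹ • m))) : ℂ)
              ∂(μ.restrict (tsupport s₁)) := funext hq_eq
      rw [IntegrableOn, h2]
      exact h1
    apply hi.integrable_of_forall_notMem_eq_zero
    intro g hg
    simp only [hq_zero g hg]
    exact integral_zero _ _
  ------------------------------------------------------------------
  -- RHS equals ∫ F dμ
  ------------------------------------------------------------------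
  have hRHS : (∫ g, ∫ m, (inner ℂ (s₁ m) (ρ g (s₂ (g⁻¹ • m))) : ℂ) ∂μ ∂μG) = ∫ m, F m ∂μ := by
    calc ∫ g, ∫ m, (inner ℂ (s₁ m) (ρ g (s₂ (g⁻¹ • m))) : ℂ) ∂μ ∂μG
        = ∫ g in E, ∫ m, (inner ℂ (s₁ m) (ρ g (s₂ (g⁻¹ • m))) : ℂ) ∂μ ∂μG := by
          refine (setIntegral_eq_integral_of_forall_compl_eq_zero fun g hg => ?_).symm
          simp only [hq_zero g hg]
          exact integral_zero _ _
      _ = ∫ g in E, ∫ m in tsupport s₁, (inner ℂ (s₁ m) (ρ g (s₂ (g⁻¹ • m))) : ℂ) ∂μ ∂μG := by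
          congr 1
          funext g
          exact hq_eq g
      _ = ∫ m in tsupport s₁, ∫ g in E, (inner ℂ (s₁ m) (ρ g (s₂ (g⁻¹ • m))) : ℂ) ∂μG ∂μ :=
          integral_integral_swap hq_int
      _ = ∫ m in tsupport s₁, F m ∂μ := by
          refine setIntegral_congr_fun hK₁.isClosed.measurableSet fun m hm => ?_
          have hint : Integrable (fun g => ρ g (s₂ (g⁻¹ • m))) (μG.restrict E) :=
            (aux_integrable_integrand μG ρ hρ hproper h₂_cont h₂_supp m).restrict
          rw [integral_inner hint, hFdef]
          congr 1
          apply setIntegral_eq_integral_of_forall_compl_eq_zero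
          intro g hg
          have h2 : s₂ (g⁻¹ • m) = 0 := by
            by_contra h2
            exact hg ⟨g⁻¹ • m, subset_tsupport _ h2, by simpa [smul_inv_smul] using hm⟩
          simp [h2]
      _ = ∫ m, F m ∂μ :=
          setIntegral_eq_integral_of_forall_compl_eq_zero fun m hm => hF0 m hm
  ------------------------------------------------------------------
  -- pointwise expansion of the inner product of averages
  ------------------------------------------------------------------
  have hpt : ∀ m : M,
      (inner ℂ (∫ g, ρ g (s₁ (g⁻¹ • m)) ∂μG) (∫ g, ρ g (s₂ (g⁻¹ • m)) ∂μG) : ℂ)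
        = ∫ g, F (g⁻¹ • m) ∂μG := by
    intro m
    have hint₁ := aux_integrable_integrand μG ρ hρ hproper h₁_cont h₁_supp m
    conv_lhs => rw [← inner_conj_symm]
    conv_lhs => rw [← integral_inner hint₁ (∫ g, ρ g (s₂ (g⁻¹ • m)) ∂μG)]
    conv_lhs => rw [← integral_conj]
    congr 1
    funext g
    rw [inner_conj_symm]
    rw [← aux_avg_equivariant μG ρ hρ hproper h₂_cont h₂_supp g m, (ρ g).inner_map_map]
  ------------------------------------------------------------------
  -- the main computation for the LHS
  ------------------------------------------------------------------
  set E' : Set G := {g : G | ∃ x ∈ tsupport s₁, g • x ∈ tsupport c} with hE'def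
  have hE' : IsCompact E' := aux_isCompact_transporter hproper hK₁ hKc
  have hE'm : MeasurableSet E' := hE'.isClosed.measurableSet
  haveI : IsFiniteMeasure (μG.restrict E') :=
    ⟨by rw [Measure.restrict_apply_univ]; exact hE'.measure_lt_top⟩
  haveI : IsFiniteMeasure (μ.restrict (tsupport c)) :=
    ⟨by rw [Measure.restrict_apply_univ]; exact hKc.measure_lt_top⟩
  -- support property: F (g⁻¹ • m) = 0 unless g ∈ E' (when m ∈ tsupport c)
  have hsupp1 : ∀ m ∈ tsupport c, ∀ g ∉ E', F (g⁻¹ • m) = 0 := by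
    intro m hm g hg
    by_contra h
    have h1 : s₁ (g⁻¹ • m) ≠ 0 := by
      intro h1
      apply h
      rw [hFdef]
      simp [h1]
    exact hg ⟨g⁻¹ • m, subset_tsupport _ h1, by simpa [smul_inv_smul] using hm⟩
  -- support property: c (g • m) = 0 unless g ∈ E' (when m ∈ tsupport s₁)
  have hsupp2 : ∀ m ∈ tsupport s₁, ∀ g ∉ E', c (g • m) = 0 := by
    intro m hm g hg
    by_contra h
    exact hg ⟨m, hm, subset_tsupport _ h⟩
  -- integrability of the two joint integrands
  have hr'_int : Integrable (fun p : M × G => (c p.1 : ℂ) ^ 2 * F (p.2⁻¹ • p.1))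
      ((μ.restrict (tsupport c)).prod (μG.restrict E')) := by
    apply aux_integrable_prod
    · exact ((Complex.continuous_ofReal.comp (hc_cont.comp continuous_fst)).pow 2).mul
        (hFcont.comp ((continuous_snd.inv).smul continuous_fst))
    · apply HasCompactSupport.intro (hKc.prod hE')
      rintro ⟨m, g⟩ hp
      by_cases hm : c m = 0
      · simp [hm]
      · have hmK : m ∈ tsupport c := subset_tsupport _ hm
        have hgE : g ∉ E' := fun hg => hp (Set.mk_mem_prod hmK hg)
        rw [hsupp1 m hmK g hgE, mul_zero]
  have hr''_int : Integrable (fun p : G × M => (c (p.1 • p.2) : ℂ) ^ 2 * F p.2)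
      ((μG.restrict E').prod (μ.restrict (tsupport s₁))) := by
    apply aux_integrable_prod
    · exact ((Complex.continuous_ofReal.comp (hc_cont.comp continuous_smul)).pow 2).mul
        (hFcont.comp continuous_snd)
    · apply HasCompactSupport.intro (hE'.prod hK₁)
      rintro ⟨g, m⟩ hp
      by_cases hm : F m = 0
      · simp [hm]
      · have hmK : m ∈ tsupport s₁ := by
          by_contra hmK
          exact hm (hF0 m hmK)
        have hgE : g ∉ E' := fun hg => hp (Set.mk_mem_prod hg hmK)
        rw [hsupp2 m hmK g hgE]
        norm_num
  -- the chain of equalities for the LHS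
  have hLHS : (∫ m, (c m : ℂ) ^ 2 *
      (inner ℂ (∫ g, ρ g (s₁ (g⁻¹ • m)) ∂μG) (∫ g, ρ g (s₂ (g⁻¹ • m)) ∂μG) : ℂ) ∂μ)
      = ∫ m, F m ∂μ := by
    calc ∫ m, (c m : ℂ) ^ 2 *
        (inner ℂ (∫ g, ρ g (s₁ (g⁻¹ • m)) ∂μG) (∫ g, ρ g (s₂ (g⁻¹ • m)) ∂μG) : ℂ) ∂μ
        = ∫ m, (c m : ℂ) ^ 2 * ∫ g, F (g⁻¹ • m) ∂μG ∂μ := by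
          congr 1
          funext m
          rw [hpt m]
      _ = ∫ m in tsupport c, (c m : ℂ) ^ 2 * ∫ g, F (g⁻¹ • m) ∂μG ∂μ := by
          refine (setIntegral_eq_integral_of_forall_compl_eq_zero fun m hm => ?_).symm
          simp [image_eq_zero_of_notMem_tsupport hm]
      _ = ∫ m in tsupport c, ∫ g in E', (c m : ℂ) ^ 2 * F (g⁻¹ • m) ∂μG ∂μ := by
          refine setIntegral_congr_fun hKc.isClosed.measurableSet fun m hm => ?_
          rw [integral_const_mul]
          congr 1
          refine (setIntegral_eq_integral_of_forall_compl_eq_zero fun g hg => ?_).symm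
          exact hsupp1 m hm g hg
      _ = ∫ g in E', ∫ m in tsupport c, (c m : ℂ) ^ 2 * F (g⁻¹ • m) ∂μ ∂μG :=
          integral_integral_swap hr'_int
      _ = ∫ g in E', ∫ m, (c m : ℂ) ^ 2 * F (g⁻¹ • m) ∂μ ∂μG := by
          congr 1
          funext g
          refine setIntegral_eq_integral_of_forall_compl_eq_zero fun m hm => ?_
          simp [image_eq_zero_of_notMem_tsupport hm]
      _ = ∫ g in E', ∫ m, (c (g • m) : ℂ) ^ 2 * F m ∂μ ∂μG := by
          congr 1
          funext g
          have h := integral_smul_eq_self (μ := μ)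
            (fun x : M => (c (g • x) : ℂ) ^ 2 * F x) (g := g⁻¹)
          simpa [smul_inv_smul] using h
      _ = ∫ g in E', ∫ m in tsupport s₁, (c (g • m) : ℂ) ^ 2 * F m ∂μ ∂μG := by
          congr 1
          funext g
          refine (setIntegral_eq_integral_of_forall_compl_eq_zero fun m hm => ?_).symm
          rw [hF0 m hm, mul_zero]
      _ = ∫ m in tsupport s₁, ∫ g in E', (c (g • m) : ℂ) ^ 2 * F m ∂μG ∂μ :=
          integral_integral_swap hr''_int
      _ = ∫ m in tsupport s₁, F m ∂μ := by
          refine setIntegral_congr_fun hK₁.isClosed.measurableSet fun m hm => ?_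
          rw [integral_mul_const]
          have h1 : ∫ g in E', ((c (g • m) : ℂ)) ^ 2 ∂μG = ∫ g, ((c (g • m) : ℂ)) ^ 2 ∂μG := by
            refine setIntegral_eq_integral_of_forall_compl_eq_zero fun g hg => ?_
            rw [hsupp2 m hm g hg]
            norm_num
          have hf_cont : Continuous fun g : G => (c (g • m)) ^ 2 :=
            (hc_cont.comp (continuous_id.smul continuous_const)).pow 2
          have hf_supp : HasCompactSupport fun g : G => (c (g • m)) ^ 2 := by
            apply HasCompactSupport.intro
              (aux_isCompact_transporter hproper (isCompact_singleton : IsCompact {m}) hKc)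
            intro g hg
            have h0 : c (g • m) = 0 := by
              by_contra h0
              exact hg ⟨m, rfl, subset_tsupport _ h0⟩
            rw [h0]
            norm_num
          have h3 : ∫ g, (c (g • m)) ^ 2 ∂μG = 1 := by
            rw [← aux_integral_inv_eq μG hf_cont hf_supp]
            exact hc_cutoff m
          have h2 : ∫ g, ((c (g • m) : ℂ)) ^ 2 ∂μG = 1 := by
            calc ∫ g, ((c (g • m) : ℂ)) ^ 2 ∂μG
                = ∫ g, (((c (g • m)) ^ 2 : ℝ) : ℂ) ∂μG := by norm_cast
              _ = (((∫ g, (c (g • m)) ^ 2 ∂μG : ℝ)) : ℂ) := integral_ofReal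
              _ = 1 := by rw [h3]; norm_num
          rw [h1, h2, one_mul]
      _ = ∫ m, F m ∂μ :=
          setIntegral_eq_integral_of_forall_compl_eq_zero fun m hm => hF0 m hm
  exact ⟨int1, int2, by rw [hLHS, hRHS]⟩
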